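/- Let a < b be real numbers, let p ≥ 1 be an integer, and let h > 0 be such that (b−a)/h is a positive integer. Then every u ∈ S̃_{p,h}(a,b) satisfies the inverse inequality |u|_{H¹(a,b)} ≤ 2√3 · h^{−1} · ‖u‖_{L²(a,b)}. -/

import Mathlib

open MeasureTheory Set

/-- The `L²(a,b)` norm of a function. -/
noncomputable def L2 (a b : ℝ) (v : ℝ → ℝ) : ℝ :=
  Real.sqrt (∫ x in Set.Ioo a b, v x ^ 2)

/-- `u` belongs to the spline space `S_{p,h}(a,b)` of maximum smoothness
(`u` is `(p-1)`-times continuously differentiable on `[a,b]` and coincides with a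
polynomial of degree at most `p` on each of the `n = (b-a)/h` subintervals). -/
def IsSplineOn (p n : ℕ) (h a b : ℝ) (u : ℝ → ℝ) : Prop :=
  ContDiffOn ℝ (p - 1 : ℕ) u (Set.Icc a b) ∧
  ∀ j < n, ∃ P : Polynomial ℝ, P.natDegree ≤ p ∧
    ∀ x ∈ Set.Icc (a + j * h) (a + (j + 1) * h), u x = P.eval x

/-- `u ∈ H¹(a,b)` with weak derivative `g`: `u` is absolutely continuous on `[a,b]`
(an indefinite integral of the locally integrable `g`) and `g` is square-integrable. -/
def IsH1On (a b : ℝ) (u g : ℝ → ℝ) : Prop :=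
  IntervalIntegrable g volume a b ∧
  (∀ x ∈ Set.Icc a b, u x = u a + ∫ t in a..x, g t) ∧
  IntegrableOn (fun x => g x ^ 2) (Set.Ioo a b)

/-- The reduced spline space `S̃_{p,h}(a,b)`: splines whose odd derivatives of order
`< p` vanish at both endpoints. -/
def IsReducedSplineOn (p n : ℕ) (h a b : ℝ) (u : ℝ → ℝ) : Prop :=
  IsSplineOn p n h a b u ∧
  ∀ l : ℕ, 2 * l + 1 < p →
    iteratedDerivWithin (2 * l + 1) u (Set.Icc a b) a = 0 ∧
    iteratedDerivWithin (2 * l + 1) u (Set.Icc a b) b = 0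

namespace RSII
open Polynomial intervalIntegral

noncomputable def D (a h : ℝ) (n : ℕ) (P : ℕ → Polynomial ℝ) (k : ℕ) : ℝ :=
  ∑ j ∈ Finset.range n, ∫ x in (a + (j : ℝ) * h)..(a + ((j : ℝ) + 1) * h),
    ((Polynomial.derivative^[k] (P j)).eval x) ^ 2

lemma D_nonneg {a h : ℝ} {n : ℕ} (hh : 0 ≤ h) (P : ℕ → Polynomial ℝ) (k : ℕ) :
    0 ≤ D a h n P k := by
  refine Finset.sum_nonneg fun j _ => ?_
  refine intervalIntegral.integral_nonneg (by linarith) fun x _ => sq_nonneg _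

lemma integral_CS {s t : ℝ} (hst : s ≤ t) (f g : ℝ → ℝ) (hf : Continuous f)
    (hg : Continuous g) :
    ∫ x in s..t, f x * g x ≤
      Real.sqrt (∫ x in s..t, f x ^ 2) * Real.sqrt (∫ x in s..t, g x ^ 2) := by
  set A := ∫ x in s..t, f x ^ 2 with hA
  set B := ∫ x in s..t, g x ^ 2 with hB
  set T := ∫ x in s..t, f x * g x with hT
  have hA0 : 0 ≤ A := intervalIntegral.integral_nonneg hst fun x _ => sq_nonneg _
  have hB0 : 0 ≤ B := intervalIntegral.integral_nonneg hst fun x _ => sq_nonneg _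
  have key : ∀ l : ℝ, 0 ≤ l ^ 2 * A - 2 * l * T + B := by
    intro l
    have h2 : (0:ℝ) ≤ ∫ x in s..t, (l * f x - g x) ^ 2 :=
      intervalIntegral.integral_nonneg hst fun x _ => sq_nonneg _
    have h3 : ∫ x in s..t, (l * f x - g x) ^ 2 = l ^ 2 * A - 2 * l * T + B := by
      have h1 : (fun x => (l * f x - g x) ^ 2)
          = fun x => l ^ 2 * f x ^ 2 - 2 * l * (f x * g x) + g x ^ 2 := by
        funext x; ring
      rw [h1, intervalIntegral.integral_add, intervalIntegral.integral_sub,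
        intervalIntegral.integral_const_mul, intervalIntegral.integral_const_mul]
      · exact (Continuous.intervalIntegrable (by continuity) _ _)
      · exact (Continuous.intervalIntegrable (by continuity) _ _)
      · exact (Continuous.intervalIntegrable (by continuity) _ _)
      · exact (hg.pow 2).intervalIntegrable _ _
    linarith [h3 ▸ h2]
  rcases le_or_gt T 0 with hT0 | hT0
  · exact hT0.trans (by positivity)
  · by_cases hA' : A = 0
    · exfalso
      have hk := key ((B + 1) / (2 * T))
      rw [hA'] at hk
      have h2T : (2 : ℝ) * ((B + 1) / (2 * T)) * T = B + 1 := by field_simp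
      nlinarith
    · have hApos : 0 < A := lt_of_le_of_ne hA0 (Ne.symm hA')
      have hk := key (T / A)
      have hTT : T ^ 2 ≤ A * B := by
        have hq : (T / A) ^ 2 * A - 2 * (T / A) * T + B = B - T ^ 2 / A := by
          field_simp; ring
        rw [hq] at hk
        have : T ^ 2 / A ≤ B := by linarith
        calc T ^ 2 = T ^ 2 / A * A := by field_simp
          _ ≤ B * A := by nlinarith
          _ = A * B := mul_comm _ _
      calc T ≤ Real.sqrt (T ^ 2) := by rw [Real.sqrt_sq hT0.le]
        _ ≤ Real.sqrt (A * B) := Real.sqrt_le_sqrt hTT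
        _ = _ := Real.sqrt_mul hA0 _

lemma sum_sqrt_CS {n : ℕ} (A B : ℕ → ℝ) (hA : ∀ j, 0 ≤ A j) (hB : ∀ j, 0 ≤ B j) :
    ∑ j ∈ Finset.range n, Real.sqrt (A j) * Real.sqrt (B j)
      ≤ Real.sqrt (∑ j ∈ Finset.range n, A j) * Real.sqrt (∑ j ∈ Finset.range n, B j) := by
  have h := Finset.sum_sq_le_sum_mul_sum_of_sq_eq_mul (Finset.range n)
    (r := fun j => Real.sqrt (A j) * Real.sqrt (B j)) (f := A) (g := B)
    (fun i _ => hA i) (fun i _ => hB i)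
    (fun i _ => by rw [mul_pow, Real.sq_sqrt (hA i), Real.sq_sqrt (hB i)])
  have h1 : 0 ≤ ∑ j ∈ Finset.range n, Real.sqrt (A j) * Real.sqrt (B j) :=
    Finset.sum_nonneg fun j _ => mul_nonneg (Real.sqrt_nonneg _) (Real.sqrt_nonneg _)
  rw [← Real.sqrt_mul (Finset.sum_nonneg fun j _ => hA j)]
  calc (∑ j ∈ Finset.range n, Real.sqrt (A j) * Real.sqrt (B j))
      = Real.sqrt ((∑ j ∈ Finset.range n, Real.sqrt (A j) * Real.sqrt (B j)) ^ 2) :=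
        (Real.sqrt_sq h1).symm
    _ ≤ _ := Real.sqrt_le_sqrt h

lemma D_base (a h : ℝ) (n m : ℕ) (P : ℕ → Polynomial ℝ) (hh : 0 < h)
    (hdeg : ∀ j < n, (Polynomial.derivative^[m] (P j)).natDegree ≤ 1) :
    D a h n P (m + 1) ≤ 12 / h ^ 2 * D a h n P m := by
  unfold D
  rw [Finset.mul_sum]
  refine Finset.sum_le_sum fun j hj => ?_
  have hj' : j < n := Finset.mem_range.mp hj
  set Q := Polynomial.derivative^[m] (P j) with hQdef
  have hQ : Q = C (Q.coeff 1) * X + C (Q.coeff 0) :=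
    eq_X_add_C_of_natDegree_le_one (hdeg j hj')
  set c1 := Q.coeff 1
  set c0 := Q.coeff 0
  have hiter : Polynomial.derivative^[m + 1] (P j) = derivative Q := by
    rw [Function.iterate_succ_apply']
  have hdQ : derivative Q = C c1 := by
    rw [hQ]; simp
  set s := a + (j : ℝ) * h with hs
  have hts : a + ((j : ℝ) + 1) * h = s + h := by ring
  rw [hiter, hdQ, hts]
  have e1 : ∫ x in s..(s + h), ((C c1).eval x) ^ 2 = c1 ^ 2 * h := by
    simp [intervalIntegral.integral_const]; ring
  have e2 : ∫ x in s..(s + h), (Q.eval x) ^ 2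
      = c1 ^ 2 * (((s+h) ^ 3 - s ^ 3) / 3) + 2 * c1 * c0 * (((s+h) ^ 2 - s ^ 2) / 2)
        + c0 ^ 2 * h := by
    have h1 : (fun x => (Q.eval x) ^ 2)
        = fun x => c1 ^ 2 * x ^ 2 + 2 * c1 * c0 * x + c0 ^ 2 := by
      funext x; rw [hQ]; simp; ring
    rw [h1, intervalIntegral.integral_add, intervalIntegral.integral_add,
      intervalIntegral.integral_const_mul, intervalIntegral.integral_const_mul,
      integral_pow, integral_id, intervalIntegral.integral_const]
    · norm_num [smul_eq_mul]; ring
    · exact Continuous.intervalIntegrable (by fun_prop) _ _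
    · exact Continuous.intervalIntegrable (by fun_prop) _ _
    · exact Continuous.intervalIntegrable (by fun_prop) _ _
    · exact Continuous.intervalIntegrable (by fun_prop) _ _
  rw [e1, e2]
  have h2 : (0:ℝ) < h ^ 2 := by positivity
  rw [div_mul_eq_mul_div, le_div_iff₀ h2]
  clear_value c1 c0 s
  nlinarith [mul_nonneg hh.le (sq_nonneg (2 * c1 * s + c1 * h + 2 * c0))]

lemma D_step (a h : ℝ) (n m : ℕ) (P : ℕ → Polynomial ℝ) (hh : 0 < h) (hn : 0 < n)
    (match0 : ∀ j, j + 1 < n →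
      (Polynomial.derivative^[m] (P j)).eval (a + ((j : ℝ) + 1) * h)
        = (Polynomial.derivative^[m] (P (j + 1))).eval (a + ((j : ℝ) + 1) * h))
    (match1 : ∀ j, j + 1 < n →
      (Polynomial.derivative^[m + 1] (P j)).eval (a + ((j : ℝ) + 1) * h)
        = (Polynomial.derivative^[m + 1] (P (j + 1))).eval (a + ((j : ℝ) + 1) * h))
    (bdry0 : (Polynomial.derivative^[m + 1] (P 0)).eval a
        * (Polynomial.derivative^[m] (P 0)).eval a = 0)
    (bdry1 : (Polynomial.derivative^[m + 1] (P (n - 1))).eval (a + (n : ℝ) * h)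
        * (Polynomial.derivative^[m] (P (n - 1))).eval (a + (n : ℝ) * h) = 0) :
    D a h n P (m + 1) ≤ Real.sqrt (D a h n P m) * Real.sqrt (D a h n P (m + 2)) := by
  set t : ℕ → ℝ := fun j => a + (j : ℝ) * h with ht
  have htsucc : ∀ j : ℕ, t (j + 1) = a + ((j : ℝ) + 1) * h := by
    intro j; simp only [ht]; push_cast; ring
  have htle : ∀ j : ℕ, t j ≤ t (j + 1) := by
    intro j; rw [htsucc]; simp only [ht]; nlinarith [hh.le]
  -- boundary pairing function
  set F : ℕ → ℝ := fun j =>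
    (Polynomial.derivative^[m + 1] (P (min j (n - 1)))).eval (t j)
      * (Polynomial.derivative^[m] (P (min j (n - 1)))).eval (t j) with hF
  -- per-element integration by parts
  have elem : ∀ j < n,
      ∫ x in t j..t (j + 1), ((Polynomial.derivative^[m + 1] (P j)).eval x) ^ 2
        = (F (j + 1) - F j)
          + ∫ x in t j..t (j + 1),
              ((Polynomial.derivative^[m] (P j)).eval x)
                * (-(Polynomial.derivative^[m + 2] (P j)).eval x) := by
    intro j hj
    have ibp := intervalIntegral.integral_deriv_mul_eq_sub
      (a := t j) (b := t (j + 1))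
      (u := fun x => (Polynomial.derivative^[m + 1] (P j)).eval x)
      (v := fun x => (Polynomial.derivative^[m] (P j)).eval x)
      (u' := fun x => (Polynomial.derivative^[m + 2] (P j)).eval x)
      (v' := fun x => (Polynomial.derivative^[m + 1] (P j)).eval x)
      (fun x _ => by
        have := Polynomial.hasDerivAt (Polynomial.derivative^[m + 1] (P j)) x
        rwa [← Function.iterate_succ_apply' Polynomial.derivative (m + 1)] at this)
      (fun x _ => by
        have := Polynomial.hasDerivAt (Polynomial.derivative^[m] (P j)) x
        rwa [← Function.iterate_succ_apply' Polynomial.derivative m] at this)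
      (Continuous.intervalIntegrable (by fun_prop) _ _)
      (Continuous.intervalIntegrable (by fun_prop) _ _)
    have hsplit : ∫ x in t j..t (j + 1),
        ((Polynomial.derivative^[m + 2] (P j)).eval x
            * (Polynomial.derivative^[m] (P j)).eval x
          + (Polynomial.derivative^[m + 1] (P j)).eval x
            * (Polynomial.derivative^[m + 1] (P j)).eval x)
        = (∫ x in t j..t (j + 1),
            (Polynomial.derivative^[m + 2] (P j)).eval x
              * (Polynomial.derivative^[m] (P j)).eval x)
          + ∫ x in t j..t (j + 1), ((Polynomial.derivative^[m + 1] (P j)).eval x) ^ 2 := by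
      rw [intervalIntegral.integral_add (Continuous.intervalIntegrable (by fun_prop) _ _)
        (Continuous.intervalIntegrable (by fun_prop) _ _)]
      congr 1
      refine intervalIntegral.integral_congr fun x _ => ?_
      ring
    rw [hsplit] at ibp
    -- boundary identification
    have hFj : F j = (Polynomial.derivative^[m + 1] (P j)).eval (t j)
        * (Polynomial.derivative^[m] (P j)).eval (t j) := by
      have : min j (n - 1) = j := min_eq_left (by omega)
      rw [hF]; simp only [this]
    have hFj1 : F (j + 1) = (Polynomial.derivative^[m + 1] (P j)).eval (t (j + 1))
        * (Polynomial.derivative^[m] (P j)).eval (t (j + 1)) := by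
      rcases Nat.lt_or_ge (j + 1) n with hlt | hge
      · have : min (j + 1) (n - 1) = j + 1 := min_eq_left (by omega)
        rw [hF]; simp only [this]
        rw [htsucc, ← match0 j hlt, ← match1 j hlt]
      · have hj1 : j + 1 = n := by omega
        have : min (j + 1) (n - 1) = j := by omega
        rw [hF]; simp only [this]
    have hneg : ∫ x in t j..t (j + 1),
        ((Polynomial.derivative^[m] (P j)).eval x)
          * (-(Polynomial.derivative^[m + 2] (P j)).eval x)
        = -∫ x in t j..t (j + 1),
            (Polynomial.derivative^[m + 2] (P j)).eval x
              * (Polynomial.derivative^[m] (P j)).eval x := by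
      rw [← intervalIntegral.integral_neg]
      refine intervalIntegral.integral_congr fun x _ => ?_
      ring
    rw [hneg, hFj, hFj1]
    linarith [ibp]
  -- sum up
  have hsum : D a h n P (m + 1)
      = (F n - F 0) + ∑ j ∈ Finset.range n,
          ∫ x in t j..t (j + 1),
            ((Polynomial.derivative^[m] (P j)).eval x)
              * (-(Polynomial.derivative^[m + 2] (P j)).eval x) := by
    unfold RSII.D
    rw [← Finset.sum_range_sub F, ← Finset.sum_add_distrib]
    refine Finset.sum_congr rfl fun j hj => ?_
    have := elem j (Finset.mem_range.mp hj)
    rw [htsucc] at this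
    simpa [ht] using this
  have hF0 : F 0 = 0 := by
    rw [hF]; simpa [ht] using bdry0
  have hFn : F n = 0 := by
    have : min n (n - 1) = n - 1 := min_eq_right (by omega)
    rw [hF]; simp only [this]
    simpa [ht] using bdry1
  rw [hsum, hF0, hFn]
  -- Cauchy-Schwarz elementwise and for sums
  calc (0 - 0) + ∑ j ∈ Finset.range n,
        ∫ x in t j..t (j + 1),
          ((Polynomial.derivative^[m] (P j)).eval x)
            * (-(Polynomial.derivative^[m + 2] (P j)).eval x)
      ≤ ∑ j ∈ Finset.range n,
          Real.sqrt (∫ x in t j..t (j + 1), ((Polynomial.derivative^[m] (P j)).eval x) ^ 2)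
            * Real.sqrt (∫ x in t j..t (j + 1),
                ((Polynomial.derivative^[m + 2] (P j)).eval x) ^ 2) := by
        rw [zero_sub, neg_zero, zero_add]
        refine Finset.sum_le_sum fun j hj => ?_
        have hcs := integral_CS (htle j)
          (fun x => (Polynomial.derivative^[m] (P j)).eval x)
          (fun x => -(Polynomial.derivative^[m + 2] (P j)).eval x)
          (by fun_prop) (by fun_prop)
        simpa [neg_sq] using hcs
    _ ≤ _ := by
        have h1 := sum_sqrt_CS (n := n)
          (fun j => ∫ x in t j..t (j + 1), ((Polynomial.derivative^[m] (P j)).eval x) ^ 2)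
          (fun j => ∫ x in t j..t (j + 1), ((Polynomial.derivative^[m + 2] (P j)).eval x) ^ 2)
          (fun j => intervalIntegral.integral_nonneg (htle j) fun x _ => sq_nonneg _)
          (fun j => intervalIntegral.integral_nonneg (htle j) fun x _ => sq_nonneg _)
        unfold RSII.D
        simp only [ht] at h1
        push_cast at h1
        simp only [ht]
        push_cast
        exact h1
end RSII

/-- Theorem 4 of the paper: robust inverse inequality for the
reduced spline space. -/
theorem reduced_spline_inverse_inequality (a b h : ℝ) (p n : ℕ)
    (hab : a < b) (hp : 1 ≤ p) (hh : 0 < h) (hn : 0 < n) (hgrid : b - a = n * h)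
    (u : ℝ → ℝ) (hu : IsReducedSplineOn p n h a b u) :
    L2 a b (deriv u) ≤ 2 * Real.sqrt 3 * h⁻¹ * L2 a b u := by
  obtain ⟨⟨hsmooth, hpoly⟩, hbc⟩ := hu
  have hb : b = a + (n : ℝ) * h := by linarith
  -- choose the polynomials
  have hex : ∀ j : ℕ, ∃ Q : Polynomial ℝ,
      j < n → Q.natDegree ≤ p ∧
        ∀ x ∈ Set.Icc (a + (j : ℝ) * h) (a + ((j : ℝ) + 1) * h), u x = Q.eval x := by
    intro j
    by_cases hj : j < n
    · obtain ⟨Q, h1, h2⟩ := hpoly j hj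
      exact ⟨Q, fun _ => ⟨h1, h2⟩⟩
    · exact ⟨0, fun hc => absurd hc hj⟩
  choose P hP using hex
  have htlt : ∀ j : ℕ, a + (j : ℝ) * h < a + ((j : ℝ) + 1) * h := fun j => by nlinarith
  have htle : ∀ j : ℕ, a + (j : ℝ) * h ≤ a + ((j : ℝ) + 1) * h := fun j => (htlt j).le
  have hsub : ∀ j : ℕ, j < n →
      Set.Icc (a + (j : ℝ) * h) (a + ((j : ℝ) + 1) * h) ⊆ Set.Icc a b := by
    intro j hj x hx
    have hj' : (j : ℝ) + 1 ≤ (n : ℝ) := by exact_mod_cast hj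
    have h1 : a ≤ a + (j : ℝ) * h := by nlinarith [Nat.cast_nonneg (α := ℝ) j]
    have h2 : a + ((j : ℝ) + 1) * h ≤ b := by rw [hb]; nlinarith
    exact ⟨h1.trans hx.1, hx.2.trans h2⟩
  have hUD : UniqueDiffOn ℝ (Set.Icc a b) := uniqueDiffOn_Icc hab
  have hUDj : ∀ j : ℕ, UniqueDiffOn ℝ (Set.Icc (a + (j : ℝ) * h) (a + ((j : ℝ) + 1) * h)) :=
    fun j => uniqueDiffOn_Icc (htlt j)
  -- identification of iterated derivatives with polynomial derivatives
  have key : ∀ k : ℕ, k ≤ p - 1 → ∀ j, j < n →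
      ∀ y ∈ Set.Icc (a + (j : ℝ) * h) (a + ((j : ℝ) + 1) * h),
      iteratedDerivWithin k u (Set.Icc a b) y = (Polynomial.derivative^[k] (P j)).eval y := by
    intro k
    induction k with
    | zero =>
      intro _ j hj y hy
      simpa using (hP j hj).2 y hy
    | succ k IH =>
      intro hk j hj y hy
      have hk' : k ≤ p - 1 := le_trans (Nat.le_succ k) hk
      rw [iteratedDerivWithin_succ]
      have hdiff : DifferentiableWithinAt ℝ (iteratedDerivWithin k u (Set.Icc a b))
          (Set.Icc a b) y := by
        refine (hsmooth.differentiableOn_iteratedDerivWithin ?_ hUD) y (hsub j hj hy)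
        exact_mod_cast Nat.lt_of_succ_le hk
      rw [← derivWithin_subset (hsub j hj) ((hUDj j) y hy) hdiff]
      rw [derivWithin_congr (fun x hx => IH hk' j hj x hx) (IH hk' j hj y hy)]
      rw [((Polynomial.hasDerivAt (Polynomial.derivative^[k] (P j))
        y).hasDerivWithinAt.derivWithin ((hUDj j) y hy))]
      rw [Function.iterate_succ_apply']
  -- matching conditions at interior knots
  have hmatch : ∀ k : ℕ, k ≤ p - 1 → ∀ j, j + 1 < n →
      (Polynomial.derivative^[k] (P j)).eval (a + ((j : ℝ) + 1) * h)
        = (Polynomial.derivative^[k] (P (j + 1))).eval (a + ((j : ℝ) + 1) * h) := by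
    intro k hk j hj
    have h1 := key k hk j (by omega) (a + ((j : ℝ) + 1) * h) ⟨htle j, le_refl _⟩
    have h2 := key k hk (j + 1) hj (a + ((j + 1 : ℕ) : ℝ) * h) ⟨le_refl _, htle (j + 1)⟩
    have hcast : (a + ((j + 1 : ℕ) : ℝ) * h) = a + ((j : ℝ) + 1) * h := by push_cast; ring
    rw [hcast] at h2
    rw [← h1, h2]
  -- boundary conditions
  have hbdryA : ∀ r : ℕ, r % 2 = 1 → r < p → (Polynomial.derivative^[r] (P 0)).eval a = 0 := by
    intro r hodd hrp
    have hmem : a ∈ Set.Icc (a + ((0 : ℕ) : ℝ) * h) (a + (((0 : ℕ) : ℝ) + 1) * h) := by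
      constructor <;> [skip; skip] <;> push_cast <;> nlinarith
    have h1 := key r (by omega) 0 hn a hmem
    obtain ⟨l, hl⟩ : ∃ l, r = 2 * l + 1 := ⟨r / 2, by omega⟩
    rw [← h1, hl]
    exact (hbc l (by omega)).1
  have hbdryB : ∀ r : ℕ, r % 2 = 1 → r < p →
      (Polynomial.derivative^[r] (P (n - 1))).eval (a + (n : ℝ) * h) = 0 := by
    intro r hodd hrp
    have hcast : ((n - 1 : ℕ) : ℝ) + 1 = (n : ℝ) := by
      have : (1 : ℕ) ≤ n := hn
      push_cast [Nat.cast_sub this]; ring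
    have hmem : a + (n : ℝ) * h ∈
        Set.Icc (a + ((n - 1 : ℕ) : ℝ) * h) (a + (((n - 1 : ℕ) : ℝ) + 1) * h) := by
      rw [hcast]
      exact ⟨by nlinarith [htle (n-1), hcast], le_refl _⟩
    have h1 := key r (by omega) (n - 1) (by omega) (a + (n : ℝ) * h) hmem
    obtain ⟨l, hl⟩ : ∃ l, r = 2 * l + 1 := ⟨r / 2, by omega⟩
    rw [← h1, hl]
    have hzb := (hbc l (by omega)).2
    rw [← hb]
    exact hzb

  -- Polynomial.derivative of u inside each element
  have hderiv : ∀ j, j < n → ∀ y ∈ Set.Ioo (a + (j : ℝ) * h) (a + ((j : ℝ) + 1) * h),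
      deriv u y = (Polynomial.derivative (P j)).eval y := by
    intro j hj y hy
    have hnhds : Set.Icc (a + (j : ℝ) * h) (a + ((j : ℝ) + 1) * h) ∈ nhds y :=
      Icc_mem_nhds hy.1 hy.2
    have hev : u =ᶠ[nhds y] fun x => (P j).eval x :=
      Filter.eventuallyEq_of_mem hnhds (hP j hj).2
    rw [hev.deriv_eq, Polynomial.deriv]
  -- splitting Ioc a b into elements
  have hunion : ∀ m : ℕ, Set.Ioc a (a + (m : ℝ) * h)
      = ⋃ j ∈ Finset.range m, Set.Ioc (a + (j : ℝ) * h) (a + ((j : ℝ) + 1) * h) := by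
    intro m
    induction m with
    | zero => simp
    | succ m IH =>
      rw [Finset.range_add_one, Finset.set_biUnion_insert, ← IH]
      have h1 : a ≤ a + (m : ℝ) * h := by nlinarith [Nat.cast_nonneg (α := ℝ) m]
      have hcast : a + ((m + 1 : ℕ) : ℝ) * h = a + ((m : ℝ) + 1) * h := by push_cast; ring
      rw [hcast, Set.union_comm, Set.Ioc_union_Ioc_eq_Ioc h1 (htle m)]
  have hdisj : Set.Pairwise ((Finset.range n : Finset ℕ) : Set ℕ)
      (Function.onFun Disjoint fun j => Set.Ioc (a + (j : ℝ) * h) (a + ((j : ℝ) + 1) * h)) := by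
    have hkey : ∀ i j : ℕ, i < j →
        Disjoint (Set.Ioc (a + (i : ℝ) * h) (a + ((i : ℝ) + 1) * h))
          (Set.Ioc (a + (j : ℝ) * h) (a + ((j : ℝ) + 1) * h)) := by
      intro i j hij
      rw [Set.Ioc_disjoint_Ioc]
      have hij' : (i : ℝ) + 1 ≤ (j : ℝ) := by exact_mod_cast hij
      calc min (a + ((i:ℝ)+1)*h) (a + ((j:ℝ)+1)*h) ≤ a + ((i:ℝ)+1)*h := min_le_left _ _
        _ ≤ a + (j:ℝ)*h := by nlinarith
        _ ≤ max (a + (i:ℝ)*h) (a + (j:ℝ)*h) := le_max_right _ _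
    intro i hi j hj hij
    rcases Nat.lt_or_ge i j with hlt | hge
    · exact hkey i j hlt
    · exact (hkey j i (by omega)).symm
  -- conversion of Ioo-integrals to sums over elements
  have hsplit : ∀ (v : ℝ → ℝ) (w : ℕ → Polynomial ℝ),
      (∀ j, j < n → ∀ y ∈ Set.Ioo (a + (j : ℝ) * h) (a + ((j : ℝ) + 1) * h),
        v y = (w j).eval y) →
      ∫ x in Set.Ioo a b, v x ^ 2
        = ∑ j ∈ Finset.range n,
            ∫ x in (a + (j : ℝ) * h)..(a + ((j : ℝ) + 1) * h), ((w j).eval x) ^ 2 := by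
    intro v w hvw
    have hint : ∀ j, j < n → IntegrableOn (fun x => v x ^ 2)
        (Set.Ioc (a + (j : ℝ) * h) (a + ((j : ℝ) + 1) * h)) volume := by
      intro j hj
      rw [integrableOn_Ioc_iff_integrableOn_Ioo]
      have hpint : IntegrableOn (fun x => ((w j).eval x) ^ 2)
          (Set.Ioo (a + (j : ℝ) * h) (a + ((j : ℝ) + 1) * h)) volume :=
        (Continuous.integrableOn_Ioc (by fun_prop)).mono_set Set.Ioo_subset_Ioc_self
      exact hpint.congr_fun (fun x hx => by rw [hvw j hj x hx]) measurableSet_Ioo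
    have h0 : ∫ x in Set.Ioo a b, v x ^ 2 = ∫ x in Set.Ioc a b, v x ^ 2 :=
      (MeasureTheory.integral_Ioc_eq_integral_Ioo).symm
    rw [h0, hb, hunion n, MeasureTheory.integral_biUnion_finset (Finset.range n)
      (fun i _ => measurableSet_Ioc) hdisj (fun i hi => hint i (Finset.mem_range.mp hi))]
    refine Finset.sum_congr rfl fun j hj => ?_
    have hj' : j < n := Finset.mem_range.mp hj
    rw [intervalIntegral.integral_of_le (htle j),
      MeasureTheory.integral_Ioc_eq_integral_Ioo, MeasureTheory.integral_Ioc_eq_integral_Ioo]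
    exact MeasureTheory.setIntegral_congr_fun measurableSet_Ioo
      (fun x hx => by rw [hvw j hj' x hx])
  have hD1 : ∫ x in Set.Ioo a b, deriv u x ^ 2 = RSII.D a h n P 1 := by
    rw [hsplit (deriv u) (fun j => Polynomial.derivative (P j)) hderiv]
    unfold RSII.D
    refine Finset.sum_congr rfl fun j hj => ?_
    simp
  have hD0 : ∫ x in Set.Ioo a b, u x ^ 2 = RSII.D a h n P 0 := by
    rw [hsplit u P (fun j hj y hy => (hP j hj).2 y (Set.Ioo_subset_Icc_self hy))]
    unfold RSII.D
    simp
  -- the constant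
  set c := 2 * Real.sqrt 3 * h⁻¹ with hc
  have hc0 : 0 ≤ c := by positivity
  have hc2 : 12 / h ^ 2 = c ^ 2 := by
    have h3 : Real.sqrt 3 ^ 2 = 3 := Real.sq_sqrt (by norm_num)
    rw [hc, mul_pow, mul_pow, h3, inv_pow, div_eq_mul_inv]
    norm_num
  -- downward induction
  have hchain : ∀ m k : ℕ, k + m = p → 1 ≤ k →
      Real.sqrt (RSII.D a h n P k) ≤ c * Real.sqrt (RSII.D a h n P (k - 1)) := by
    intro m
    induction m with
    | zero =>
      intro k hk hk1
      have hdeg : ∀ j, j < n → (Polynomial.derivative^[k - 1] (P j)).natDegree ≤ 1 := by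
        intro j hj
        have h1 := Polynomial.natDegree_iterate_derivative (P j) (k - 1)
        have h2 := (hP j hj).1
        omega
      have hbase := RSII.D_base a h n (k - 1) P hh hdeg
      rw [(by omega : k - 1 + 1 = k), hc2] at hbase
      calc Real.sqrt (RSII.D a h n P k) ≤ Real.sqrt (c ^ 2 * RSII.D a h n P (k - 1)) :=
            Real.sqrt_le_sqrt hbase
        _ = c * Real.sqrt (RSII.D a h n P (k - 1)) := by
            rw [Real.sqrt_mul (sq_nonneg c), Real.sqrt_sq hc0]
    | succ m IH =>
      intro k hk hk1
      have hkp : k ≤ p - 1 := by omega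
      have hIH := IH (k + 1) (by omega) (by omega)
      simp only [Nat.add_sub_cancel] at hIH
      have hbd : (Polynomial.derivative^[k] (P 0)).eval a
          * (Polynomial.derivative^[k - 1] (P 0)).eval a = 0 ∧
          (Polynomial.derivative^[k] (P (n - 1))).eval (a + (n : ℝ) * h)
          * (Polynomial.derivative^[k - 1] (P (n - 1))).eval (a + (n : ℝ) * h) = 0 := by
        rcases Nat.even_or_odd k with he | ho
        · have he' : k % 2 = 0 := Nat.even_iff.mp he
          have hk2 : (k - 1) % 2 = 1 := by omega
          exact ⟨mul_eq_zero_of_right _ (hbdryA (k - 1) hk2 (by omega)),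
            mul_eq_zero_of_right _ (hbdryB (k - 1) hk2 (by omega))⟩
        · have hk2 : k % 2 = 1 := Nat.odd_iff.mp ho
          exact ⟨mul_eq_zero_of_left (hbdryA k hk2 (by omega)) _,
            mul_eq_zero_of_left (hbdryB k hk2 (by omega)) _⟩
      have hstep := RSII.D_step a h n (k - 1) P hh hn
        (fun j hj => hmatch (k - 1) (by omega) j hj)
        (by
          intro j hj
          rw [(by omega : k - 1 + 1 = k)]
          exact hmatch k (by omega) j hj)
        (by rw [(by omega : k - 1 + 1 = k)]; exact hbd.1)
        (by rw [(by omega : k - 1 + 1 = k)]; exact hbd.2)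
      rw [(by omega : k - 1 + 1 = k), (by omega : k - 1 + 2 = k + 1)] at hstep
      have hx0 : 0 ≤ Real.sqrt (RSII.D a h n P k) := Real.sqrt_nonneg _
      have hy0 : 0 ≤ Real.sqrt (RSII.D a h n P (k - 1)) := Real.sqrt_nonneg _
      have hx2 : Real.sqrt (RSII.D a h n P k) ^ 2 = RSII.D a h n P k := Real.sq_sqrt (RSII.D_nonneg hh.le P k)
      rcases (hx0.eq_or_lt.imp Eq.symm id) with hxz | hxz
      · rw [show Real.sqrt (RSII.D a h n P k) = 0 from hxz]; positivity
      · have h5 : Real.sqrt (RSII.D a h n P (k - 1)) * Real.sqrt (RSII.D a h n P (k + 1))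
            ≤ Real.sqrt (RSII.D a h n P (k - 1)) * (c * Real.sqrt (RSII.D a h n P k)) :=
          mul_le_mul_of_nonneg_left hIH hy0
        have hmul : Real.sqrt (RSII.D a h n P k) * Real.sqrt (RSII.D a h n P k)
            ≤ (c * Real.sqrt (RSII.D a h n P (k - 1))) * Real.sqrt (RSII.D a h n P k) := by
          nlinarith [hstep, h5, hx2]
        exact le_of_mul_le_mul_right hmul hxz
  have hfin := hchain (p - 1) 1 (by omega) le_rfl
  norm_num at hfin
  unfold L2
  rw [hD1, hD0]
  exact hfin
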